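/- Let α : ℕ → Fin (a+2), define D on positive naturals by D(n) = max{α(k) : λ(n) ≤ k ≤ μ(n)}, and let h be a strictly increasing apart sequence with all adjacent sums D-colored m. Then for all i < j, max{α(k) : λ(h i) ≤ k ≤ μ(h j)} = m. -/

import Mathlib

/-- λ(n): the 2-adic valuation of n (least exponent in binary expansion). -/
def lam (n : ℕ) : ℕ := padicValNat 2 n

/-- μ(n): ⌊log₂ n⌋ (greatest exponent in binary expansion). -/
def mu (n : ℕ) : ℕ := Nat.log 2 n

/-- Apartness condition for a sequence. -/
def Apart (h : ℕ → ℕ) : Prop := ∀ i j, i < j → mu (h i) < lam (h j)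

/-- Sum of adjacent elements h i + h (i+1) + ... + h j. -/
def adjSum (h : ℕ → ℕ) (i j : ℕ) : ℕ := ∑ t ∈ Finset.Icc i j, h t

lemma lam_le_mu {n : ℕ} (hn : 0 < n) : lam n ≤ mu n :=
  padicValNat_le_nat_log n

lemma lam_add {x y : ℕ} (hx : 0 < x) (hy : 0 < y) (hxy : mu x < lam y) :
    lam (x + y) = lam x := by
  have hlt : lam x < lam y := lt_of_le_of_lt (lam_le_mu hx) hxy
  have hdx : (2 : ℕ) ^ lam x ∣ x := pow_padicValNat_dvd
  have hdy : (2 : ℕ) ^ lam x ∣ y :=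
    dvd_trans (pow_dvd_pow 2 hlt.le) pow_padicValNat_dvd
  have hnx : ¬ (2 : ℕ) ^ (lam x + 1) ∣ x := pow_succ_padicValNat_not_dvd hx.ne'
  have hny : (2 : ℕ) ^ (lam x + 1) ∣ y :=
    dvd_trans (pow_dvd_pow 2 hlt) pow_padicValNat_dvd
  have hle : lam x ≤ lam (x + y) :=
    (padicValNat_dvd_iff_le (by omega)).mp (Nat.dvd_add hdx hdy)
  have hge : lam (x + y) ≤ lam x := by
    by_contra hc
    push_neg at hc
    have : (2 : ℕ) ^ (lam x + 1) ∣ x + y :=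
      dvd_trans (pow_dvd_pow 2 hc) pow_padicValNat_dvd
    have hx' : (2 : ℕ) ^ (lam x + 1) ∣ x := by
      have := Nat.dvd_sub this hny
      simpa using this
    exact hnx hx'
  omega

lemma mu_add {x y : ℕ} (hx : 0 < x) (hy : 0 < y) (hxy : mu x < lam y) :
    mu (x + y) = mu y := by
  have h1 : lam y ≤ mu y := lam_le_mu hy
  have hxlt : x < 2 ^ lam y :=
    lt_of_lt_of_le (Nat.lt_pow_succ_log_self one_lt_two x)
      (Nat.pow_le_pow_right (by norm_num) hxy)
  have hdy : (2 : ℕ) ^ lam y ∣ y := pow_padicValNat_dvd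
  have hdN : (2 : ℕ) ^ lam y ∣ 2 ^ (mu y + 1) := pow_dvd_pow 2 (by omega)
  have hylt : y < 2 ^ (mu y + 1) := Nat.lt_pow_succ_log_self one_lt_two y
  have hdsub : (2 : ℕ) ^ lam y ∣ 2 ^ (mu y + 1) - y := Nat.dvd_sub hdN hdy
  have hge : 2 ^ lam y ≤ 2 ^ (mu y + 1) - y := Nat.le_of_dvd (by omega) hdsub
  refine Nat.log_eq_of_pow_le_of_lt_pow ?_ ?_
  · exact le_trans (Nat.pow_log_le_self 2 hy.ne') (by omega)
  · omega

lemma adjSum_lam_mu (h : ℕ → ℕ) (hpos : ∀ i, 0 < h i) (hap : Apart h) :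
    ∀ j i, i ≤ j → 0 < adjSum h i j ∧ lam (adjSum h i j) = lam (h i) ∧
      mu (adjSum h i j) = mu (h j) := by
  intro j
  induction j with
  | zero =>
    intro i hi
    interval_cases i
    simp only [adjSum, Finset.Icc_self, Finset.sum_singleton]
    exact ⟨hpos 0, trivial, trivial⟩
  | succ j ih =>
    intro i hi
    rcases Nat.lt_or_ge i (j + 1) with hlt | hge
    · have hij : i ≤ j := by omega
      obtain ⟨p1, p2, p3⟩ := ih i hij
      have hsum : adjSum h i (j + 1) = adjSum h i j + h (j + 1) := by
        simpa [adjSum] using Finset.sum_Icc_succ_top (by omega : i ≤ j + 1) h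
      have hlt' : mu (adjSum h i j) < lam (h (j + 1)) := by
        rw [p3]; exact hap j (j + 1) (by omega)
      rw [hsum]
      exact ⟨by have := hpos (j+1); omega,
        by rw [lam_add p1 (hpos _) hlt', p2],
        by rw [mu_add p1 (hpos _) hlt']⟩
    · have : i = j + 1 := by omega
      subst this
      simp only [adjSum, Finset.Icc_self, Finset.sum_singleton]
      exact ⟨hpos _, trivial, trivial⟩

theorem adjSum_color_max (a : ℕ) (α : ℕ → Fin (a + 2))
    (D : ℕ → Fin (a + 2))
    (hD : ∀ n, D n = (Finset.Icc (lam n) (mu n)).sup α)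
    (h : ℕ → ℕ) (hmono : StrictMono h) (hpos : ∀ i, 0 < h i) (hap : Apart h)
    (m : Fin (a + 2)) (hhom : ∀ i j, i ≤ j → D (adjSum h i j) = m) :
    ∀ i j, i < j → (Finset.Icc (lam (h i)) (mu (h j))).sup α = m := by
  intro i j hij
  obtain ⟨-, p2, p3⟩ := adjSum_lam_mu h hpos hap j i hij.le
  have := hhom i j hij.le
  rw [hD, p2, p3] at this
  exact this
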